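/- arXiv:2012.01088 — 2 statements merged into one kernel-verified Lean document; each statement's English description precedes it below -/
import Mathlib

section
/- Let $F(\theta) = \left(\sum_{i=1}^d a_i^{1+\theta/2}\right)^{2/\theta}$ where each $a_i \geq 1$. Then $F$ is nonincreasing on the interval $[1,2]$. -/
open Finset

theorem stmt_1 (d : ℕ) (a : Fin d → ℝ) (ha : ∀ i, 1 ≤ a i) :
    AntitoneOn (fun θ : ℝ => (∑ i, a i ^ (1 + θ / 2)) ^ (2 / θ))
      (Set.Icc (1 : ℝ) 2) := by
  intro x hx y hy hxy
  obtain ⟨hx1, hx2⟩ := hx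
  obtain ⟨hy1, hy2⟩ := hy
  have hx0 : (0:ℝ) < x := by linarith
  have hy0 : (0:ℝ) < y := by linarith
  simp only
  rcases Nat.eq_zero_or_pos d with hd | hd
  · subst hd
    simp only [Finset.univ_eq_empty, Finset.sum_empty]
    rw [Real.zero_rpow (by positivity : (0:ℝ) < 2 / y).ne',
      Real.zero_rpow (by positivity : (0:ℝ) < 2 / x).ne']
  · set p := 1 + x / 2 with hp
    set q := 1 + y / 2 with hq
    have hp0 : (0:ℝ) < p := by rw [hp]; linarith
    have hq0 : (0:ℝ) < q := by rw [hq]; linarith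
    have hpq : p ≤ q := by rw [hp, hq]; linarith
    obtain ⟨i0⟩ : Nonempty (Fin d) := Fin.pos_iff_nonempty.mp hd
    have hai : ∀ i, (0:ℝ) < a i := fun i => lt_of_lt_of_le one_pos (ha i)
    set Sx := ∑ i, a i ^ p with hSx
    have hSxpos : (0:ℝ) < Sx := by
      rw [hSx]; exact Finset.sum_pos (fun i _ => Real.rpow_pos_of_pos (hai i) p)
        ⟨i0, Finset.mem_univ i0⟩
    have hSx1 : (1:ℝ) ≤ Sx := by
      calc (1:ℝ) ≤ a i0 ^ p := Real.one_le_rpow (ha i0) hp0.le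
        _ ≤ Sx := Finset.single_le_sum (f := fun j => a j ^ p) (fun j _ => (Real.rpow_pos_of_pos (hai j) p).le) (Finset.mem_univ i0)
    have key : ∀ i, a i ^ q ≤ a i ^ p * Sx ^ ((q - p) / p) := by
      intro i
      have h1 : a i ^ p ≤ Sx :=
        Finset.single_le_sum (f := fun j => a j ^ p) (fun j _ => (Real.rpow_pos_of_pos (hai j) p).le) (Finset.mem_univ i)
      have h2 : a i ≤ Sx ^ (1 / p) := by
        have := Real.rpow_le_rpow (Real.rpow_nonneg (hai i).le p) h1 (div_nonneg zero_le_one hp0.le)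
        rwa [← Real.rpow_mul (hai i).le, mul_one_div_cancel hp0.ne', Real.rpow_one] at this
      have h3 : a i ^ (q - p) ≤ (Sx ^ (1 / p)) ^ (q - p) :=
        Real.rpow_le_rpow (hai i).le h2 (by linarith)
      have h4 : (Sx ^ (1 / p)) ^ (q - p) = Sx ^ ((q - p) / p) := by
        rw [← Real.rpow_mul hSxpos.le]
        ring_nf
      calc a i ^ q = a i ^ p * a i ^ (q - p) := by
            rw [← Real.rpow_add (hai i)]; ring_nf
        _ ≤ a i ^ p * Sx ^ ((q - p) / p) := by
            rw [h4] at h3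
            exact mul_le_mul_of_nonneg_left h3 (Real.rpow_nonneg (hai i).le p)
    have step1 : (∑ i, a i ^ q) ≤ Sx ^ (q / p) := by
      calc (∑ i, a i ^ q) ≤ ∑ i, a i ^ p * Sx ^ ((q - p) / p) :=
            Finset.sum_le_sum fun i _ => key i
        _ = Sx * Sx ^ ((q - p) / p) := by rw [← Finset.sum_mul]
        _ = Sx ^ (1 + (q - p) / p) := by
            rw [Real.rpow_add hSxpos, Real.rpow_one]
        _ = Sx ^ (q / p) := by
            congr 1
            field_simp
            ring
    have hexp : q / p * (2 / y) ≤ 2 / x := by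
      rw [div_mul_div_comm, div_le_div_iff₀ (by positivity) hx0]
      rw [hp, hq]
      nlinarith
    calc (∑ i, a i ^ q) ^ (2 / y)
        ≤ (Sx ^ (q / p)) ^ (2 / y) :=
          Real.rpow_le_rpow (Finset.sum_nonneg fun i _ => Real.rpow_nonneg (hai i).le q) step1 (by positivity)
      _ = Sx ^ (q / p * (2 / y)) := by rw [← Real.rpow_mul hSxpos.le]
      _ ≤ Sx ^ (2 / x) := Real.rpow_le_rpow_of_exponent_le hSx1 hexp
end

section
/- Fix $\zeta \in [0, 1/2)$ and $n \geq 1$. Let $\mathfrak{P} = \{p \in \mathbb{R}^n_+ : \sum_i p_i = 1, \ p_i \leq \frac{1}{n(1-\zeta)} \ \forall i\}$ be the CVaR ambiguity set. Then $\sup_{p \in \mathfrak{P}} \sum_{i=1}^n \left(p_i - \frac{1}{n}\right)^2 \leq \frac{1}{n^2} + \frac{1}{n}\cdot\frac{\zeta}{1-\zeta}$. -/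
open Finset

theorem stmt_12 (n : ℕ) (hn : 1 ≤ n) (ζ : ℝ) (hζ : 0 ≤ ζ) (hζ' : ζ < 1 / 2) :
    sSup {s : ℝ | ∃ p : Fin n → ℝ, (∀ i, 0 ≤ p i) ∧ (∑ i, p i = 1) ∧
        (∀ i, p i ≤ ((n : ℝ) * (1 - ζ))⁻¹) ∧ s = ∑ i, (p i - (n : ℝ)⁻¹) ^ 2} ≤
      1 / (n : ℝ) ^ 2 + (n : ℝ)⁻¹ * (ζ / (1 - ζ)) := by
  have hn0 : (0:ℝ) < n := by exact_mod_cast hn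
  have hz : (0:ℝ) < 1 - ζ := by linarith
  have hc0 : (0:ℝ) < (n:ℝ) * (1 - ζ) := mul_pos hn0 hz
  apply csSup_le
  · refine ⟨∑ i : Fin n, ((n:ℝ)⁻¹ - (n:ℝ)⁻¹)^2, fun _ => (n:ℝ)⁻¹, fun i => by positivity,
      ?_, fun i => ?_, rfl⟩
    · simp [Finset.sum_const, card_univ, nsmul_eq_mul, mul_inv_cancel₀ hn0.ne']
    · apply inv_anti₀ hc0
      nlinarith
  · rintro s ⟨p, hp0, hp1, hpc, rfl⟩
    have hsq : ∑ i, (p i - (n:ℝ)⁻¹)^2 = (∑ i, p i ^ 2) - (n:ℝ)⁻¹ := by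
      have h1 : ∀ i ∈ univ, (p i - (n:ℝ)⁻¹)^2
          = p i ^ 2 - 2 * (n:ℝ)⁻¹ * p i + (n:ℝ)⁻¹ ^ 2 := fun i _ => by ring
      rw [Finset.sum_congr rfl h1, Finset.sum_add_distrib, Finset.sum_sub_distrib,
        ← Finset.mul_sum, hp1, Finset.sum_const, card_univ, Fintype.card_fin, nsmul_eq_mul]
      field_simp
      ring
    have hbound : ∑ i, p i ^ 2 ≤ ((n:ℝ) * (1 - ζ))⁻¹ := by
      calc ∑ i, p i ^ 2 ≤ ∑ i, p i * ((n:ℝ) * (1 - ζ))⁻¹ := by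
            apply Finset.sum_le_sum
            intro i _
            rw [sq]
            exact mul_le_mul_of_nonneg_left (hpc i) (hp0 i)
        _ = ((n:ℝ) * (1 - ζ))⁻¹ := by rw [← Finset.sum_mul, hp1, one_mul]
    have hkey : ((n:ℝ) * (1 - ζ))⁻¹ - (n:ℝ)⁻¹ = (n:ℝ)⁻¹ * (ζ / (1 - ζ)) := by
      field_simp
      ring
    have h2 : (0:ℝ) ≤ 1 / (n:ℝ)^2 := by positivity
    rw [hsq]
    linarith
end
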